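/- Let A_{N6} be the 4×4 complex matrix with rows (0, −18, 0, −42), (−1, 0, −12, 0), (0, −2, 0, 6), (0, 0, 3, 0), and for a ∈ ℂ let A_{D6}(a) be the 4×4 matrix with rows (0, −3a, 0, −12), (−2, 0, 4a, 0), (0, 2, 0, 2a), (0, 0, 3, 0). Then: (i) the characteristic polynomial of A_{N6} is X⁴ − 60X² + 576; and (ii) if a, μ ∈ ℂ satisfy a² = −36/7 and μ² = 3/a, then the characteristic polynomial of μ·A_{D6}(a) also equals X⁴ − 60X² + 576, hence equals that of A_{N6}. (This is the matrix-level form of the relation that when a² = −36/7, the homogeneous Legendrian curve in ℙ³ associated to the multiply-transitive (2,3,5)-distribution N6 is projectively equivalent to the one associated to D6_a.) -/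

import Mathlib

open Matrix Polynomial

lemma charm_fin4 (a b c d e f g h i j k l m n o p : ℂ) :
    (!![a,b,c,d;e,f,g,h;i,j,k,l;m,n,o,p] : Matrix (Fin 4) (Fin 4) ℂ).charpoly
    = (!![X - C a, -C b, -C c, -C d; -C e, X - C f, -C g, -C h;
          -C i, -C j, X - C k, -C l; -C m, -C n, -C o, X - C p] : Matrix (Fin 4) (Fin 4) ℂ[X]).det := by
  rw [Matrix.charpoly]
  congr 1
  ext i j
  fin_cases i <;> fin_cases j <;> simp [charmatrix_apply]

/-- (i) The symmetry generator `A_{N6}` has characteristic polynomial `X⁴ − 60X² + 576`;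
(ii) if `a² = −36/7` and `μ² = 3/a`, then `μ·A_{D6}(a)` has the same characteristic
polynomial `X⁴ − 60X² + 576`.  This is the matrix-level form of the relation that for
`a² = −36/7` the homogeneous Legendrian curve in `ℙ³` associated to `N6` is projectively
equivalent to the one associated to `D6_a`. -/
theorem N6_D6_charpoly_relation
    (AN6 : Matrix (Fin 4) (Fin 4) ℂ)
    (hAN6 : AN6 = !![0, -18, 0, -42; -1, 0, -12, 0; 0, -2, 0, 6; 0, 0, 3, 0])
    (AD6 : ℂ → Matrix (Fin 4) (Fin 4) ℂ)
    (hAD6 : ∀ a : ℂ,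
      AD6 a = !![0, -3 * a, 0, -12; -2, 0, 4 * a, 0; 0, 2, 0, 2 * a; 0, 0, 3, 0]) :
    AN6.charpoly = X ^ 4 - C 60 * X ^ 2 + C 576 ∧
      ∀ a μ : ℂ, a ^ 2 = -36 / 7 → μ ^ 2 = 3 / a →
        (μ • AD6 a).charpoly = X ^ 4 - C 60 * X ^ 2 + C 576 := by
  constructor
  · rw [hAN6, charm_fin4]
    simp [Matrix.det_succ_row_zero, Fin.sum_univ_succ,
      show ((1:Fin 4).succAbove 2) = 3 from rfl,
      show (Fin.castSucc 2 : Fin 4) = 2 from rfl, show ((3:Fin 4).succAbove 2) = 2 from rfl, map_ofNat]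
    ring
  · intro a μ ha hμ
    have ha0 : a ≠ 0 := by intro h; rw [h] at ha; norm_num at ha
    have hμa : μ ^ 2 * a = 3 := by rw [hμ]; field_simp
    have hμ4 : 4 * μ ^ 4 = -7 := by
      have h9 : μ ^ 4 * a ^ 2 = 9 := by
        calc μ ^ 4 * a ^ 2 = (μ ^ 2 * a) ^ 2 := by ring
          _ = 9 := by rw [hμa]; norm_num
      rw [ha] at h9
      linear_combination (-7/9 : ℂ) * h9
    have hP : (C μ) ^ 2 * C a = 3 := by
      rw [← C_pow, ← C_mul, hμa]; exact map_ofNat C 3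
    have h4 : 4 * (C μ) ^ 4 = -7 := by
      rw [← C_pow, show ((4 : ℂ[X])) = C 4 from (map_ofNat C 4).symm, ← C_mul, hμ4]
      simp [map_ofNat]
    have hsm : μ • AD6 a
        = !![0, μ * (-3 * a), 0, μ * (-12); μ * (-2), 0, μ * (4 * a), 0;
             0, μ * 2, 0, μ * (2 * a); 0, 0, μ * 3, 0] := by
      rw [hAD6]
      ext i j; fin_cases i <;> fin_cases j <;> simp [Matrix.vecHead, Matrix.vecTail]
    rw [hsm, charm_fin4]
    simp [Matrix.det_succ_row_zero, Fin.sum_univ_succ,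
      show ((1:Fin 4).succAbove 2) = 3 from rfl,
      show (Fin.castSucc 2 : Fin 4) = 2 from rfl, show ((3:Fin 4).succAbove 2) = 2 from rfl, map_ofNat]
    linear_combination ((-20 : ℂ[X]) * X ^ 2 + 36 * ((C μ) ^ 2 * C a + 3)) * hP
      + (-36 : ℂ[X]) * h4
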